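/- Let A = k[t]/⟨t²⟩ and define k-linear maps α_j: A → A by α_0 = 0, α_1 = id, α_2(λ + μt) = μt, and α_j = 0 for j > 2. Then the formula s(Y ⊗ a) = α_1(a) ⊗ Y + α_2(a) ⊗ Y² extends to a twisting map s: k[Y] ⊗ A → A ⊗ k[Y]. -/
import Mathlib


open TensorProduct

/-- A twisting map `s : B ⊗ A → A ⊗ B`: it is compatible with the units and
with the multiplications of `A` and `B` (stated on pure tensors, which
suffices by linearity). -/
structure IsTwistingMap (k A B : Type*) [CommRing k] [Ring A] [Ring B]
    [Algebra k A] [Algebra k B] (s : B ⊗[k] A →ₗ[k] A ⊗[k] B) : Prop where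
  unit_left : ∀ a : A, s (1 ⊗ₜ a) = a ⊗ₜ 1
  unit_right : ∀ b : B, s (b ⊗ₜ 1) = 1 ⊗ₜ b
  mul_compat_B : ∀ (b b' : B) (a : A),
    s ((b * b') ⊗ₜ a) =
      (LinearMap.lTensor A (LinearMap.mul' k B))
        ((TensorProduct.assoc k A B B)
          ((LinearMap.rTensor B s)
            ((TensorProduct.assoc k B A B).symm
              ((LinearMap.lTensor B s)
                ((TensorProduct.assoc k B B A) ((b ⊗ₜ b') ⊗ₜ a))))))
  mul_compat_A : ∀ (b : B) (a a' : A),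
    s (b ⊗ₜ (a * a')) =
      (LinearMap.rTensor B (LinearMap.mul' k A))
        ((TensorProduct.assoc k A A B).symm
          ((LinearMap.lTensor A s)
            ((TensorProduct.assoc k A B A)
              ((LinearMap.rTensor A s)
                ((TensorProduct.assoc k B A A).symm (b ⊗ₜ (a ⊗ₜ a')))))))

set_option maxHeartbeats 1000000 in
set_option synthInstance.maxHeartbeats 400000 in
open Polynomial DualNumber TrivSqZeroExt in
theorem stmt10 (k : Type*) [CommRing k] :
    ∃ s : Polynomial k ⊗[k] DualNumber k →ₗ[k] DualNumber k ⊗[k] Polynomial k,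
      IsTwistingMap k (DualNumber k) (Polynomial k) s ∧
      ∀ a : DualNumber k, s ((X : Polynomial k) ⊗ₜ a) =
        a ⊗ₜ (X : Polynomial k) +
          (TrivSqZeroExt.inr a.snd : DualNumber k) ⊗ₜ ((X : Polynomial k) ^ 2) := by
  classical
  set φ : Polynomial k →ₐ[k] Polynomial k := aeval (X + X ^ 2) with hφ
  set g : DualNumber k →ₗ[k] DualNumber k :=
    (TrivSqZeroExt.inrHom k k) ∘ₗ (TrivSqZeroExt.sndHom k k) with hg
  set f : DualNumber k →ₗ[k] DualNumber k := LinearMap.id - g with hf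
  set s : Polynomial k ⊗[k] DualNumber k →ₗ[k] DualNumber k ⊗[k] Polynomial k :=
    (TensorProduct.map f LinearMap.id
        ∘ₗ (TensorProduct.comm k (Polynomial k) (DualNumber k)).toLinearMap)
      + (TensorProduct.map g φ.toLinearMap
        ∘ₗ (TensorProduct.comm k (Polynomial k) (DualNumber k)).toLinearMap) with hs
  have hsapp : ∀ (p : Polynomial k) (a : DualNumber k),
      s (p ⊗ₜ a) = inl a.fst ⊗ₜ p + inr a.snd ⊗ₜ φ p := by
    intro p a
    simp [hs, hf, hg, TensorProduct.map_tmul, TensorProduct.sub_tmul]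
    rw [← TensorProduct.sub_tmul]
    congr 1
    rw [← DualNumber.inr_eq_smul_eps, sub_eq_iff_eq_add]
    exact (inl_fst_add_inr_snd_eq a).symm
  refine ⟨s, ⟨?_, ?_, ?_, ?_⟩, ?_⟩
  · intro a
    rw [hsapp]
    simp only [map_one]
    rw [← TensorProduct.add_tmul, inl_fst_add_inr_snd_eq]
  · intro p
    rw [hsapp]
    simp [← TensorProduct.tmul_add]
  · intro b b' a
    simp only [TensorProduct.assoc_tmul, LinearMap.lTensor_tmul, hsapp,
      TensorProduct.tmul_add, map_add, LinearEquiv.map_add,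
      TensorProduct.assoc_symm_tmul, LinearMap.rTensor_tmul,
      LinearMap.mul'_apply, map_mul]
    simp [hsapp, TensorProduct.add_tmul, TensorProduct.tmul_add, map_mul]
  · intro b a a'
    simp only [TensorProduct.assoc_symm_tmul, LinearMap.rTensor_tmul, hsapp,
      TensorProduct.add_tmul, map_add, TensorProduct.assoc_tmul,
      LinearMap.lTensor_tmul, TensorProduct.tmul_add,
      TensorProduct.assoc_symm_tmul, LinearMap.mul'_apply]
    simp only [fst_mul, DualNumber.snd_mul, inl_mul_inl, inl_mul_inr, inr_mul_inl,
      inr_mul_inr]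
    simp [TensorProduct.add_tmul, inr_add, smul_eq_mul, mul_comm, add_smul]
    abel
  · intro a
    rw [hsapp]
    have : φ X = X + X ^ 2 := by simp [hφ]
    rw [this, TensorProduct.tmul_add]
    have ha : (a ⊗ₜ (X : Polynomial k) : DualNumber k ⊗[k] Polynomial k)
        = inl a.fst ⊗ₜ X + inr a.snd ⊗ₜ X := by
      rw [← TensorProduct.add_tmul, inl_fst_add_inr_snd_eq]
    rw [ha]
    abel
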